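/- Let R be a ring with identity, let V be a pseudo-valuation on R, and let I₁, …, Iₙ be two-sided ideals of R such that for all k ≠ l the sum Iₖ + Iₗ is V-dense in R. If each Iₖ is (V, δ)-dense in R for some 0 < δ < 1, then the intersection ⋂ₖ₌₁ⁿ Iₖ is V-dense in R. -/

import Mathlib

open Pointwise

theorem aux_pow_bound {R : Type*} [Ring R] (V : R → ℝ)
    (hnn : ∀ x, 0 ≤ V x)
    (hmul : ∀ x y, V (x * y) ≤ V x * V y) {e : R} {δ : ℝ} (hδ0 : 0 < δ)
    (h : V e < δ) : ∀ m : ℕ, 1 ≤ m → V (e ^ m) < δ ^ m := by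
  intro m hm
  induction m with
  | zero => omega
  | succ k ih =>
    rcases Nat.eq_or_lt_of_le hm with h1 | h1
    · obtain rfl : k = 0 := by omega
      simpa using h
    · have hk : 1 ≤ k := by omega
      have := ih hk
      calc V (e ^ (k + 1)) = V (e ^ k * e) := by rw [pow_succ]
        _ ≤ V (e ^ k) * V e := hmul _ _
        _ < δ ^ k * δ := mul_lt_mul' (le_of_lt this) h (hnn _) (by positivity)
        _ = δ ^ (k + 1) := by rw [pow_succ]

/-- Each ideal contains elements arbitrarily `V`-close to `1`. -/
theorem aux_near_one {R : Type*} [Ring R] (V : R → ℝ)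
    (hnn : ∀ x, 0 ≤ V x)
    (hmul : ∀ x y, V (x * y) ≤ V x * V y)
    {δ : ℝ} (hδ0 : 0 < δ) (hδ1 : δ < 1) (I : TwoSidedIdeal R)
    (hd : ∃ a ∈ I, V (1 - a) < δ) :
    ∀ η > 0, ∃ a ∈ I, V (1 - a) < η := by
  intro η hη
  obtain ⟨a₀, ha₀, hVa₀⟩ := hd
  obtain ⟨m, hm⟩ := exists_pow_lt_of_lt_one hη hδ1
  set e : R := 1 - a₀ with he
  have hem : δ ^ (m + 1) ≤ δ ^ m := by
    calc δ ^ (m+1) = δ ^ m * δ := by rw [pow_succ]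
      _ ≤ δ ^ m * 1 := by
          apply mul_le_mul_of_nonneg_left (le_of_lt hδ1) (by positivity)
      _ = δ ^ m := mul_one _
  refine ⟨a₀ * ∑ i ∈ Finset.range (m + 1), e ^ i, I.mul_mem_right _ _ ha₀, ?_⟩
  have key : (1 : R) - a₀ * ∑ i ∈ Finset.range (m + 1), e ^ i = e ^ (m + 1) := by
    have := mul_geom_sum e (m + 1)
    have ha : a₀ = 1 - e := by rw [he]; noncomm_ring
    rw [ha]
    have : (1 - e) * ∑ i ∈ Finset.range (m + 1), e ^ i
        = -((e - 1) * ∑ i ∈ Finset.range (m + 1), e ^ i) := by noncomm_ring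
    rw [this, mul_geom_sum]
    noncomm_ring
  rw [key]
  calc V (e ^ (m + 1)) < δ ^ (m + 1) :=
        aux_pow_bound V hnn hmul hδ0 hVa₀ (m + 1) (by omega)
    _ ≤ δ ^ m := hem
    _ < η := hm

/-- An element of the intersection arbitrarily close to `1`. -/
theorem aux_inter_near_one {R : Type*} [Ring R] (V : R → ℝ)
    (hnn : ∀ x, 0 ≤ V x)
    (hadd : ∀ x y, V (x + y) ≤ V x + V y)
    (hmul : ∀ x y, V (x * y) ≤ V x * V y)
    (hneg : ∀ x, V (-x) = V x)
    (hzero : V 0 = 0) :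
    ∀ (n : ℕ) (I : Fin n → TwoSidedIdeal R),
      (∀ k, ∀ η > 0, ∃ a ∈ I k, V (1 - a) < η) →
      ∀ η > (0:ℝ), ∃ x : R, (∀ k, x ∈ I k) ∧ V (1 - x) < η := by
  intro n
  induction n with
  | zero =>
    intro I _ η hη
    exact ⟨1, fun k => k.elim0, by simpa [hzero] using hη⟩
  | succ m ih =>
    intro I hI η hη
    have hV1 : (0:ℝ) < V 1 + 1 := by have := hnn 1; linarith
    obtain ⟨y, hy, hVy⟩ := ih (fun k => I k.succ) (fun k => hI k.succ)
      (η / (2 * (V 1 + 1))) (by positivity)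
    obtain ⟨a, ha, hVa⟩ := hI 0 (min (η / 2) 1) (by positivity)
    refine ⟨a * y, ?_, ?_⟩
    · intro k
      rcases Fin.eq_zero_or_eq_succ k with rfl | ⟨j, rfl⟩
      · exact (I 0).mul_mem_right _ _ ha
      · exact (I j.succ).mul_mem_left _ _ (hy j)
    · have hsplit : (1 : R) - a * y = (1 - a) + a * (1 - y) := by noncomm_ring
      have hVa2 : V a ≤ V 1 + 1 := by
        rw [show a = 1 + -(1 - a) by noncomm_ring]
        calc V (1 + -(1 - a)) ≤ V 1 + V (-(1 - a)) := hadd _ _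
          _ = V 1 + V (1 - a) := by rw [hneg]
          _ ≤ V 1 + 1 := by
              have := lt_of_lt_of_le hVa (min_le_right _ _)
              linarith
      have h1 : V (1 - a) < η / 2 := lt_of_lt_of_le hVa (min_le_left _ _)
      have h2 : V (a * (1 - y)) ≤ η / 2 := by
        calc V (a * (1 - y)) ≤ V a * V (1 - y) := hmul _ _
          _ ≤ (V 1 + 1) * (η / (2 * (V 1 + 1))) := by
              apply mul_le_mul hVa2 (le_of_lt hVy) (hnn _) (le_of_lt hV1)
          _ = η / 2 := by field_simp
      calc V (1 - a * y) = V ((1 - a) + a * (1 - y)) := by rw [hsplit]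
        _ ≤ V (1 - a) + V (a * (1 - y)) := hadd _ _
        _ < η / 2 + η / 2 := by linarith
        _ = η := by ring

/-- Let `V` be a pseudo-valuation on a ring `R` and `I 0, …, I (n-1)` two-sided ideals such
that for `k ≠ l` the sum `I k + I l` is `V`-dense in `R`. If each `I k` is `(V, δ)`-dense in
`R` for some `0 < δ < 1`, then the intersection `⋂ k, I k` is `V`-dense in `R`. -/
theorem inter_vdense_of_pairwise {R : Type*} [Ring R] (V : R → ℝ)
    (hnn : ∀ x, 0 ≤ V x)
    (hadd : ∀ x y, V (x + y) ≤ V x + V y)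
    (hmul : ∀ x y, V (x * y) ≤ V x * V y)
    (hneg : ∀ x, V (-x) = V x)
    (hzero : V 0 = 0)
    {n : ℕ} (I : Fin n → TwoSidedIdeal R) (δ : ℝ) (hδ0 : 0 < δ) (hδ1 : δ < 1)
    (hsum : ∀ k l : Fin n, k ≠ l → ∀ r : R, ∀ ε > 0,
      ∃ a ∈ I k, ∃ b ∈ I l, V (r - (a + b)) < ε)
    (hdense : ∀ k : Fin n, ∀ r : R, ∃ a ∈ I k, V (r - a) < δ) :
    ∀ r : R, ∀ ε > 0, ∃ x : R, (∀ k, x ∈ I k) ∧ V (r - x) < ε := by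
  intro r ε hε
  have hVr : (0:ℝ) < V r + 1 := by have := hnn r; linarith
  have hnear : ∀ k, ∀ η > (0:ℝ), ∃ a ∈ I k, V (1 - a) < η := fun k =>
    aux_near_one V hnn hmul hδ0 hδ1 (I k) (hdense k 1)
  obtain ⟨x₀, hx₀, hVx₀⟩ := aux_inter_near_one V hnn hadd hmul hneg hzero n I hnear
    (ε / (V r + 1)) (by positivity)
  refine ⟨x₀ * r, fun k => (I k).mul_mem_right _ _ (hx₀ k), ?_⟩
  have : r - x₀ * r = (1 - x₀) * r := by noncomm_ring
  rw [this]
  calc V ((1 - x₀) * r) ≤ V (1 - x₀) * V r := hmul _ _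
    _ ≤ (ε / (V r + 1)) * V r := mul_le_mul_of_nonneg_right (le_of_lt hVx₀) (hnn r)
    _ < (ε / (V r + 1)) * (V r + 1) := by
        apply mul_lt_mul_of_pos_left (by linarith) (by positivity)
    _ = ε := by field_simp
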